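/- There exists an absolute constant c > 0 (one can take c = 1/2) such that for all 1 ≤ q < ∞ and 1 ≤ σ < ∞, all m, k ∈ ℕ, and all n ∈ ℤ_+ with n ≤ mk/2, one has d_n(B^{m,k}_{∞,∞}, l^{m,k}_{q,σ}) ≥ c · m^{1/q} k^{1/σ}. -/

import Mathlib

open scoped ENNReal NNReal BigOperators Pointwise

noncomputable section

def lNorm (s : ℝ≥0∞) {ι : Type*} [Fintype ι] (x : ι → ℝ) : ℝ :=
  if s = ∞ then ⨆ i, |x i| else (∑ i, |x i| ^ s.toReal) ^ (1 / s.toReal)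

def mixedNorm (p θ : ℝ≥0∞) {m k : ℕ} (x : Fin m → Fin k → ℝ) : ℝ :=
  lNorm θ fun j => lNorm p fun i => x i j

def mixedBall (m k : ℕ) (p θ : ℝ≥0∞) : Set (Fin m → Fin k → ℝ) :=
  {x | mixedNorm p θ x ≤ 1}

def kolWidth (m k n : ℕ) (M : Set (Fin m → Fin k → ℝ)) (q σ : ℝ≥0∞) : ℝ :=
  ⨅ L : {L : Submodule ℝ (Fin m → Fin k → ℝ) // Module.finrank ℝ L ≤ n},
    ⨆ x : M, ⨅ y : L.1,
      mixedNorm q σ ((x : Fin m → Fin k → ℝ) - (y : Fin m → Fin k → ℝ))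

def ir (p : ℝ≥0∞) : ℝ := p⁻¹.toReal

def omegaE (p q : ℝ≥0∞) : ℝ :=
  if q = 2 then 1 else min ((ir p - ir q) / (1 / 2 - ir q)) 1

def expOf (t : ℝ) : ℝ≥0∞ := (ENNReal.ofReal t)⁻¹

def Phi (q σ : ℝ≥0∞) (m k n : ℕ) (p θ : ℝ≥0∞) : ℝ≥0∞ :=
  let M : ℝ≥0∞ := m
  let K : ℝ≥0∞ := k
  let W : ℝ≥0∞ := ((n : ℝ≥0∞))⁻¹ ^ ((1 : ℝ) / 2) * M ^ ir q * K ^ ir σ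
  let Wm : ℝ≥0∞ := ((n : ℝ≥0∞))⁻¹ ^ ((1 : ℝ) / 2) * M ^ ((1 : ℝ) / 2) * K ^ ir σ
  let Wk : ℝ≥0∞ := ((n : ℝ≥0∞))⁻¹ ^ ((1 : ℝ) / 2) * M ^ ir q * K ^ ((1 : ℝ) / 2)
  if q ≤ p then
    if σ ≤ θ then
      M ^ (ir q - ir p) * K ^ (ir σ - ir θ)
    else
      min (M ^ (ir q - ir p)) (M ^ (ir q - ir p) * Wm ^ omegaE θ σ)
  else if σ ≤ θ then
    min (K ^ (ir σ - ir θ)) (K ^ (ir σ - ir θ) * Wk ^ omegaE p q)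
  else if p ≤ 2 ∧ θ ≤ 2 then
    min 1 W
  else if omegaE p q ≤ omegaE θ σ then
    min (min 1 (W ^ omegaE p q)) (M ^ (ir q - ir p) * Wm ^ omegaE θ σ)
  else
    min (min 1 (W ^ omegaE θ σ)) (K ^ (ir σ - ir θ) * Wk ^ omegaE p q)

/-- `Ψ₀ = inf_{α ∈ A} ν_α Φ(p_α, θ_α)`. -/
def Psi0 {A : Type*} (q σ : ℝ≥0∞) (m k n : ℕ) (p θ : A → ℝ≥0∞) (ν : A → ℝ) : ℝ≥0∞ :=
  ⨅ a : A, ENNReal.ofReal (ν a) * Phi q σ m k n (p a) (θ a)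

/-- `Ψ₁`: infimum over pairs `(α, β) ∈ N₁`, i.e. `p_α ≠ q` and
`1/q = (1−λ)/p_α + λ/p_β` for some `λ ∈ (0,1)`, of
`ν_α^{1−λ} ν_β^{λ} Φ(q, θ̂_{α,β})` where `1/θ̂_{α,β} = (1−λ)/θ_α + λ/θ_β`. -/
def Psi1 {A : Type*} (q σ : ℝ≥0∞) (m k n : ℕ) (p θ : A → ℝ≥0∞) (ν : A → ℝ) : ℝ≥0∞ :=
  ⨅ (a : A) (b : A) (lam : ℝ)
    (_ : 0 < lam ∧ lam < 1 ∧ p a ≠ q ∧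
      ir q = (1 - lam) * ir (p a) + lam * ir (p b)),
    ENNReal.ofReal (ν a) ^ (1 - lam) * ENNReal.ofReal (ν b) ^ lam *
      Phi q σ m k n q (expOf ((1 - lam) * ir (θ a) + lam * ir (θ b)))

/-- `Ψ₂`: infimum over `(α, β) ∈ N₂` of `ν_α^{1−μ} ν_β^{μ} Φ(p̂_{α,β}, σ)`. -/
def Psi2 {A : Type*} (q σ : ℝ≥0∞) (m k n : ℕ) (p θ : A → ℝ≥0∞) (ν : A → ℝ) : ℝ≥0∞ :=
  ⨅ (a : A) (b : A) (lam : ℝ)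
    (_ : 0 < lam ∧ lam < 1 ∧ θ a ≠ σ ∧
      ir σ = (1 - lam) * ir (θ a) + lam * ir (θ b)),
    ENNReal.ofReal (ν a) ^ (1 - lam) * ENNReal.ofReal (ν b) ^ lam *
      Phi q σ m k n (expOf ((1 - lam) * ir (p a) + lam * ir (p b))) σ

/-- `Ψ₃`: infimum over `(α, β) ∈ N₃` of `ν_α^{1−λ} ν_β^{λ} Φ(2, θ̃_{α,β})`. -/
def Psi3 {A : Type*} (q σ : ℝ≥0∞) (m k n : ℕ) (p θ : A → ℝ≥0∞) (ν : A → ℝ) : ℝ≥0∞ :=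
  ⨅ (a : A) (b : A) (lam : ℝ)
    (_ : 0 < lam ∧ lam < 1 ∧ p a ≠ 2 ∧
      (1 : ℝ) / 2 = (1 - lam) * ir (p a) + lam * ir (p b)),
    ENNReal.ofReal (ν a) ^ (1 - lam) * ENNReal.ofReal (ν b) ^ lam *
      Phi q σ m k n 2 (expOf ((1 - lam) * ir (θ a) + lam * ir (θ b)))

/-- `Ψ₄`: infimum over `(α, β) ∈ N₄` of `ν_α^{1−μ} ν_β^{μ} Φ(p̃_{α,β}, 2)`. -/
def Psi4 {A : Type*} (q σ : ℝ≥0∞) (m k n : ℕ) (p θ : A → ℝ≥0∞) (ν : A → ℝ) : ℝ≥0∞ :=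
  ⨅ (a : A) (b : A) (lam : ℝ)
    (_ : 0 < lam ∧ lam < 1 ∧ θ a ≠ 2 ∧
      (1 : ℝ) / 2 = (1 - lam) * ir (θ a) + lam * ir (θ b)),
    ENNReal.ofReal (ν a) ^ (1 - lam) * ENNReal.ofReal (ν b) ^ lam *
      Phi q σ m k n (expOf ((1 - lam) * ir (p a) + lam * ir (p b))) 2

/-- `Ψ₅`: infimum over `(α, β) ∈ N₅`, i.e. such that for some `λ ∈ (0,1)` the
interpolated exponents satisfy `p_{α,β} ∈ (2,q)`, `θ_{α,β} ∈ (2,σ)`, lie on the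
"critical line", while `(1/p_α, 1/θ_α)` does not, of
`ν_α^{1−λ} ν_β^{λ} Φ(p_{α,β}, θ_{α,β})`. -/
def Psi5 {A : Type*} (q σ : ℝ≥0∞) (m k n : ℕ) (p θ : A → ℝ≥0∞) (ν : A → ℝ) : ℝ≥0∞ :=
  ⨅ (a : A) (b : A) (lam : ℝ)
    (_ : 0 < lam ∧ lam < 1 ∧
      ir q < (1 - lam) * ir (p a) + lam * ir (p b) ∧
      (1 - lam) * ir (p a) + lam * ir (p b) < 1 / 2 ∧
      ir σ < (1 - lam) * ir (θ a) + lam * ir (θ b) ∧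
      (1 - lam) * ir (θ a) + lam * ir (θ b) < 1 / 2 ∧
      ((1 - lam) * ir (p a) + lam * ir (p b) - ir q) / (1 / 2 - ir q) =
        ((1 - lam) * ir (θ a) + lam * ir (θ b) - ir σ) / (1 / 2 - ir σ) ∧
      (ir (p a) - ir q) / (1 / 2 - ir q) ≠ (ir (θ a) - ir σ) / (1 / 2 - ir σ)),
    ENNReal.ofReal (ν a) ^ (1 - lam) * ENNReal.ofReal (ν b) ^ lam *
      Phi q σ m k n (expOf ((1 - lam) * ir (p a) + lam * ir (p b)))
        (expOf ((1 - lam) * ir (θ a) + lam * ir (θ b)))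

/-- `Ψ₆`: infimum over triples `(α, β, γ) ∈ N₆` (with positive weights `τ` summing to `1`
interpolating `(1/q, 1/σ)`, the three points not collinear) of
`ν_α^{τ_α} ν_β^{τ_β} ν_γ^{τ_γ} Φ(q, σ)`. -/
def Psi6 {A : Type*} (q σ : ℝ≥0∞) (m k n : ℕ) (p θ : A → ℝ≥0∞) (ν : A → ℝ) : ℝ≥0∞ :=
  ⨅ (a : A) (b : A) (c : A) (ta : ℝ) (tb : ℝ) (tc : ℝ)
    (_ : 0 < ta ∧ 0 < tb ∧ 0 < tc ∧ ta + tb + tc = 1 ∧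
      ir q = ta * ir (p a) + tb * ir (p b) + tc * ir (p c) ∧
      ir σ = ta * ir (θ a) + tb * ir (θ b) + tc * ir (θ c) ∧
      (ir (p b) - ir (p a)) * (ir (θ c) - ir (θ a)) ≠
        (ir (p c) - ir (p a)) * (ir (θ b) - ir (θ a))),
    ENNReal.ofReal (ν a) ^ ta * ENNReal.ofReal (ν b) ^ tb * ENNReal.ofReal (ν c) ^ tc *
      Phi q σ m k n q σ

/-- `Ψ₇`: as `Ψ₆`, with `(1/2, 1/2)` in place of `(1/q, 1/σ)`. -/
def Psi7 {A : Type*} (q σ : ℝ≥0∞) (m k n : ℕ) (p θ : A → ℝ≥0∞) (ν : A → ℝ) : ℝ≥0∞ :=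
  ⨅ (a : A) (b : A) (c : A) (ta : ℝ) (tb : ℝ) (tc : ℝ)
    (_ : 0 < ta ∧ 0 < tb ∧ 0 < tc ∧ ta + tb + tc = 1 ∧
      (1 : ℝ) / 2 = ta * ir (p a) + tb * ir (p b) + tc * ir (p c) ∧
      (1 : ℝ) / 2 = ta * ir (θ a) + tb * ir (θ b) + tc * ir (θ c) ∧
      (ir (p b) - ir (p a)) * (ir (θ c) - ir (θ a)) ≠
        (ir (p c) - ir (p a)) * (ir (θ b) - ir (θ a))),
    ENNReal.ofReal (ν a) ^ ta * ENNReal.ofReal (ν b) ^ tb * ENNReal.ofReal (ν c) ^ tc *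
      Phi q σ m k n 2 2

/-- `min_{0 ≤ j ≤ 7} Ψ_j`. -/
def PsiMin {A : Type*} (q σ : ℝ≥0∞) (m k n : ℕ) (p θ : A → ℝ≥0∞) (ν : A → ℝ) : ℝ≥0∞ :=
  Psi0 q σ m k n p θ ν ⊓ Psi1 q σ m k n p θ ν ⊓ Psi2 q σ m k n p θ ν ⊓
    Psi3 q σ m k n p θ ν ⊓ Psi4 q σ m k n p θ ν ⊓ Psi5 q σ m k n p θ ν ⊓
    Psi6 q σ m k n p θ ν ⊓ Psi7 q σ m k n p θ ν

/-- The set `V^{m,k}_{r,l}`: the convex hull of all `γ(e)`, where `e` is the 0/1 matrix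
supported on the first `r` rows and first `l` columns and `γ` ranges over all
permutations of rows/columns composed with sign changes of rows/columns. -/
def Vset (m k r l : ℕ) : Set (Fin m → Fin k → ℝ) :=
  convexHull ℝ {y | ∃ (t₁ : Equiv.Perm (Fin m)) (t₂ : Equiv.Perm (Fin k))
      (e₁ : Fin m → ℝ) (e₂ : Fin k → ℝ),
    (∀ i, e₁ i = 1 ∨ e₁ i = -1) ∧ (∀ j, e₂ j = 1 ∨ e₂ j = -1) ∧
    y = fun i j => e₁ i * e₂ j * (if (t₁ i : ℕ) < r ∧ (t₂ j : ℕ) < l then 1 else 0)}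



lemma cube_point {ι : Type*} [Fintype ι] (E : Submodule ℝ (EuclideanSpace ℝ ι)) :
    ∃ z ∈ E, (∀ i, |z i| ≤ 1) ∧ (Module.finrank ℝ E : ℝ) ≤ ∑ i, |z i| := by
  classical
  set K : Set (EuclideanSpace ℝ ι) := (E : Set _) ∩ {z | ∀ i, |z i| ≤ 1} with hK
  have hKclosed : IsClosed K := by
    apply (Submodule.closed_of_finiteDimensional E).inter
    have : {z : EuclideanSpace ℝ ι | ∀ i, |z i| ≤ 1} = ⋂ i, {z | |z i| ≤ 1} := by
      ext z; simp
    rw [this]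
    exact isClosed_iInter fun i =>
      isClosed_le (continuous_abs.comp (EuclideanSpace.proj i).continuous) continuous_const
  have hKbdd : Bornology.IsBounded K := by
    apply (Metric.isBounded_closedBall (x := (0 : EuclideanSpace ℝ ι))
      (r := Real.sqrt (Fintype.card ι))).subset
    intro z hz
    simp only [Metric.mem_closedBall, dist_zero_right]
    rw [EuclideanSpace.norm_eq]
    apply Real.sqrt_le_sqrt
    calc ∑ i, ‖z i‖^2 ≤ ∑ _i : ι, (1:ℝ) := by
          apply Finset.sum_le_sum
          intro i _
          have := hz.2 i
          rw [Real.norm_eq_abs]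
          nlinarith [abs_nonneg (z i), sq_abs (z i)]
      _ = Fintype.card ι := by simp
  have hKcomp : IsCompact K := Metric.isCompact_of_isClosed_isBounded hKclosed hKbdd
  have hKne : K.Nonempty := ⟨0, E.zero_mem, fun i => by simp⟩
  obtain ⟨z, hz⟩ := hKcomp.extremePoints_nonempty hKne
  obtain ⟨⟨hzE, hzcube⟩, hzext⟩ := hz
  refine ⟨z, hzE, hzcube, ?_⟩
  set S : Finset ι := Finset.univ.filter (fun i => |z i| = 1) with hS
  -- restriction map is injective on E
  have hinj : ∀ w : E, (∀ i ∈ S, (w : EuclideanSpace ℝ ι) i = 0) → w = 0 := by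
    intro w hw
    by_contra hw0
    have hwne : (w : EuclideanSpace ℝ ι) ≠ 0 := fun h => hw0 (Subtype.ext h)
    -- build perturbation
    set C : ℝ := 1 + ∑ i, |(w : EuclideanSpace ℝ ι) i| with hC
    have hCpos : 0 < C := by
      have : (0:ℝ) ≤ ∑ i, |(w : EuclideanSpace ℝ ι) i| :=
        Finset.sum_nonneg fun i _ => abs_nonneg _
      linarith
    -- δ : min over i ∉ S of 1 - |z i|, but define pointwise bound instead
    have key : ∀ i, ∀ t : ℝ, |t| ≤ 1/C → (i ∉ S → |t| * C ≤ 1 - |z i| → True) := by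
      intro _ _ _ _ _; trivial
    -- choose t
    obtain ⟨t, ht0, htb⟩ : ∃ t : ℝ, 0 < t ∧ ∀ i, i ∉ S → t * |(w : EuclideanSpace ℝ ι) i| ≤ 1 - |z i| := by
      by_cases hSu : (Finset.univ \ S).Nonempty
      · set δ : ℝ := (Finset.univ \ S).inf' hSu (fun i => 1 - |z i|) with hδ
        have hδpos : 0 < δ := by
          rw [hδ]
          apply Finset.lt_inf'_iff _ |>.2
          intro i hi
          have h2 : |z i| ≠ 1 := by
            have := (Finset.mem_sdiff.1 hi).2
            simpa [hS] using this
          have h1 := hzcube i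
          cases lt_or_eq_of_le h1 with
          | inl h => linarith
          | inr h => exact absurd h h2
        refine ⟨δ / C, div_pos hδpos hCpos, ?_⟩
        intro i hi
        have h1 : δ ≤ 1 - |z i| := by
          apply Finset.inf'_le
          simp only [Finset.mem_sdiff, Finset.mem_univ, true_and]
          exact hi
        have h2 : |(w : EuclideanSpace ℝ ι) i| ≤ C := by
          rw [hC]
          have : |(w : EuclideanSpace ℝ ι) i| ≤ ∑ j, |(w : EuclideanSpace ℝ ι) j| :=
            Finset.single_le_sum (f := fun j => |(w : EuclideanSpace ℝ ι) j|)
              (fun j _ => abs_nonneg _) (Finset.mem_univ i)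
          linarith
        calc δ / C * |(w : EuclideanSpace ℝ ι) i| ≤ δ / C * C := by
              apply mul_le_mul_of_nonneg_left h2 (le_of_lt (div_pos hδpos hCpos))
          _ = δ := by field_simp
          _ ≤ 1 - |z i| := h1
      · refine ⟨1, one_pos, fun i hi => ?_⟩
        exact absurd (Finset.mem_sdiff.2 ⟨Finset.mem_univ i, hi⟩) (by simp_all [Finset.not_nonempty_iff_eq_empty.1 (by exact fun h => hSu h)])
    -- z ± t w ∈ K
    have hmem : ∀ s : ℝ, |s| ≤ t → z + s • (w : EuclideanSpace ℝ ι) ∈ K := by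
      intro s hs
      constructor
      · exact E.add_mem hzE (E.smul_mem s w.2)
      · intro i
        by_cases hi : i ∈ S
        · have : (w : EuclideanSpace ℝ ι) i = 0 := hw i hi
          show |(z + s • (w : EuclideanSpace ℝ ι)) i| ≤ 1
          simp only [PiLp.add_apply, PiLp.smul_apply, this, smul_eq_mul, mul_zero, add_zero]
          exact hzcube i
        · show |(z + s • (w : EuclideanSpace ℝ ι)) i| ≤ 1
          simp only [PiLp.add_apply, PiLp.smul_apply, smul_eq_mul]
          have h1 : |s * (w : EuclideanSpace ℝ ι) i| ≤ t * |(w : EuclideanSpace ℝ ι) i| := by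
            rw [abs_mul]
            exact mul_le_mul_of_nonneg_right hs (abs_nonneg _)
          have h2 := htb i hi
          calc |z i + s * (w : EuclideanSpace ℝ ι) i| ≤ |z i| + |s * (w : EuclideanSpace ℝ ι) i| := abs_add_le _ _
            _ ≤ |z i| + (1 - |z i|) := by linarith
            _ = 1 := by ring
    have h1 : z + t • (w : EuclideanSpace ℝ ι) ∈ K := hmem t (by rw [abs_of_pos ht0])
    have h2 : z + (-t) • (w : EuclideanSpace ℝ ι) ∈ K := hmem (-t) (by rw [abs_neg, abs_of_pos ht0])
    have hseg : z ∈ openSegment ℝ (z + t • (w : EuclideanSpace ℝ ι)) (z + (-t) • (w : EuclideanSpace ℝ ι)) := by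
      rw [openSegment_eq_image]
      refine ⟨1/2, by norm_num, ?_⟩
      module
    have := hzext h1 h2 hseg
    have hne : z + t • (w : EuclideanSpace ℝ ι) ≠ z := by
      intro h
      apply hwne
      have : t • (w : EuclideanSpace ℝ ι) = 0 := by
        have := congrArg (· - z) h
        simpa using this
      exact (smul_eq_zero.1 this).resolve_left (ne_of_gt ht0)
    exact hne this
  -- finrank E ≤ card S
  have hrank : Module.finrank ℝ E ≤ S.card := by
    classical
    let f : E →ₗ[ℝ] (S → ℝ) := {
      toFun := fun w s => (w : EuclideanSpace ℝ ι) s.1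
      map_add' := fun a b => rfl
      map_smul' := fun c a => rfl }
    have hfinj : Function.Injective f := by
      rw [← LinearMap.ker_eq_bot, LinearMap.ker_eq_bot']
      intro w hw
      apply hinj w
      intro i hi
      exact congrFun hw ⟨i, hi⟩
    calc Module.finrank ℝ E ≤ Module.finrank ℝ (S → ℝ) :=
          LinearMap.finrank_le_finrank_of_injective hfinj
      _ = S.card := by simp [Module.finrank_pi]
  calc (Module.finrank ℝ E : ℝ) ≤ S.card := by exact_mod_cast hrank
    _ = ∑ i ∈ S, (1:ℝ) := by simp
    _ = ∑ i ∈ S, |z i| := by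
        apply Finset.sum_congr rfl
        intro i hi
        simp only [hS, Finset.mem_filter] at hi
        exact hi.2.symm
    _ ≤ ∑ i, |z i| := Finset.sum_le_sum_of_subset_of_nonneg (Finset.subset_univ S)
        (fun i _ _ => abs_nonneg _)

lemma perp_point (m k : ℕ) (L : Submodule ℝ (Fin m → Fin k → ℝ)) :
    ∃ z : Fin m → Fin k → ℝ, (∀ y ∈ L, ∑ i, ∑ j, y i j * z i j = 0) ∧
      (∀ i j, |z i j| ≤ 1) ∧
      ((m * k : ℝ) - Module.finrank ℝ L ≤ ∑ i, ∑ j, |z i j|) := by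
  classical
  let e : (Fin m → Fin k → ℝ) ≃ₗ[ℝ] EuclideanSpace ℝ (Fin m × Fin k) :=
    (LinearEquiv.curry ℝ ℝ (Fin m) (Fin k)).symm ≪≫ₗ
      (WithLp.linearEquiv 2 ℝ (Fin m × Fin k → ℝ)).symm
  have he : ∀ (x : Fin m → Fin k → ℝ) (i : Fin m) (j : Fin k), e x (i, j) = x i j :=
    fun x i j => rfl
  set L' : Submodule ℝ (EuclideanSpace ℝ (Fin m × Fin k)) := L.map (e : (Fin m → Fin k → ℝ) →ₗ[ℝ] EuclideanSpace ℝ (Fin m × Fin k)) with hL'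
  obtain ⟨w, hwE, hwcube, hwsum⟩ := cube_point L'ᗮ
  refine ⟨fun i j => w (i, j), ?_, fun i j => hwcube (i, j), ?_⟩
  · intro y hy
    have h1 : e y ∈ L' := Submodule.mem_map_of_mem hy
    have h2 : (inner ℝ (e y) w : ℝ) = 0 := (Submodule.mem_orthogonal L' w).1 hwE (e y) h1
    rw [PiLp.inner_apply] at h2
    simp only [RCLike.inner_apply, conj_trivial] at h2
    rw [← h2, Fintype.sum_prod_type]
    exact Finset.sum_congr rfl fun i _ => Finset.sum_congr rfl fun j _ => by
      rw [he y i j, mul_comm]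
  · have h1 : Module.finrank ℝ L' + Module.finrank ℝ L'ᗮ = m * k := by
      rw [Submodule.finrank_add_finrank_orthogonal, finrank_euclideanSpace]
      simp
    have h2 : Module.finrank ℝ L' = Module.finrank ℝ L := LinearEquiv.finrank_map_eq e L
    have h3 : ((m * k : ℕ) : ℝ) - Module.finrank ℝ L ≤ Module.finrank ℝ L'ᗮ := by
      rw [← h2]
      have := h1
      push_cast [← this]
      ring_nf
      linarith
    calc (m * k : ℝ) - Module.finrank ℝ L ≤ Module.finrank ℝ L'ᗮ := by
          push_cast at h3 ⊢; linarith
      _ ≤ ∑ p : Fin m × Fin k, |w p| := hwsum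
      _ = ∑ i, ∑ j, |w (i, j)| := Fintype.sum_prod_type _

lemma sum_le_lp {ι : Type*} [Fintype ι] [Nonempty ι] {t : ℝ} (ht : 1 ≤ t)
    (a : ι → ℝ) (ha : ∀ i, 0 ≤ a i) :
    (Fintype.card ι : ℝ) ^ (1 / t - 1) * ∑ i, a i ≤ (∑ i, a i ^ t) ^ (1 / t) := by
  have hcard : (0 : ℝ) < Fintype.card ι := by
    exact_mod_cast Fintype.card_pos
  have ht0 : 0 < t := lt_of_lt_of_le one_pos ht
  have key := Real.rpow_arith_mean_le_arith_mean_rpow Finset.univ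
    (fun _ : ι => 1 / (Fintype.card ι : ℝ)) a
    (fun i _ => by positivity) (by rw [Finset.sum_const, Finset.card_univ, nsmul_eq_mul]; exact mul_one_div_cancel hcard.ne') (fun i _ => ha i) ht
  -- key : ((∑ (1/card) * a i)) ^ t ≤ ∑ (1/card) * a i ^ t
  have h1 : (∑ i, (1 / (Fintype.card ι : ℝ)) * a i) = (∑ i, a i) / Fintype.card ι := by
    rw [← Finset.mul_sum]; ring
  have h2 : (∑ i, (1 / (Fintype.card ι : ℝ)) * a i ^ t) = (∑ i, a i ^ t) / Fintype.card ι := by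
    rw [← Finset.mul_sum]; ring
  rw [h1, h2] at key
  have hsum : 0 ≤ ∑ i, a i := Finset.sum_nonneg fun i _ => ha i
  have hsumt : 0 ≤ ∑ i, a i ^ t := Finset.sum_nonneg fun i _ => Real.rpow_nonneg (ha i) t
  have h3 : (∑ i, a i) / Fintype.card ι ≤ ((∑ i, a i ^ t) / Fintype.card ι) ^ (1 / t) := by
    have := Real.rpow_le_rpow (by positivity) key (by positivity : (0:ℝ) ≤ 1 / t)
    rwa [← Real.rpow_mul (by positivity), mul_one_div,
      div_self (ne_of_gt ht0), Real.rpow_one] at this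
  calc (Fintype.card ι : ℝ) ^ (1 / t - 1) * ∑ i, a i
      = (Fintype.card ι : ℝ) ^ (1 / t) * ((∑ i, a i) / Fintype.card ι) := by
        rw [Real.rpow_sub hcard, Real.rpow_one]; ring
    _ ≤ (Fintype.card ι : ℝ) ^ (1 / t) * ((∑ i, a i ^ t) / Fintype.card ι) ^ (1 / t) := by
        apply mul_le_mul_of_nonneg_left h3 (Real.rpow_nonneg (le_of_lt hcard) _)
    _ = (∑ i, a i ^ t) ^ (1 / t) := by
        rw [← Real.mul_rpow (le_of_lt hcard) (by positivity)]
        rw [mul_div_cancel₀]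
        exact ne_of_gt hcard

lemma lNorm_nonneg {ι : Type*} [Fintype ι] {t : ℝ≥0∞} (ht : t ≠ ∞) (v : ι → ℝ) :
    0 ≤ lNorm t v := by
  rw [lNorm, if_neg ht]
  positivity

lemma mixedNorm_nonneg {m k : ℕ} {q σ : ℝ≥0∞} (hσ : σ ≠ ∞) (w : Fin m → Fin k → ℝ) :
    0 ≤ mixedNorm q σ w := by
  rw [mixedNorm]
  exact lNorm_nonneg hσ _

lemma lNorm_le_of_le {ι : Type*} [Fintype ι] [Nonempty ι] {t : ℝ≥0∞} (htop : t ≠ ∞)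
    (ht1 : 1 ≤ t.toReal) {v : ι → ℝ} {c : ℝ} (hc : 0 ≤ c) (h : ∀ i, |v i| ≤ c) :
    lNorm t v ≤ (Fintype.card ι : ℝ) * c := by
  rw [lNorm, if_neg htop]
  have ht0 : 0 < t.toReal := lt_of_lt_of_le one_pos ht1
  have hcard1 : (1 : ℝ) ≤ Fintype.card ι := by exact_mod_cast Fintype.card_pos
  have h1 : ∑ i, |v i| ^ t.toReal ≤ (Fintype.card ι : ℝ) * c ^ t.toReal := by
    calc ∑ i, |v i| ^ t.toReal ≤ ∑ _i : ι, c ^ t.toReal :=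
          Finset.sum_le_sum fun i _ =>
            Real.rpow_le_rpow (abs_nonneg _) (h i) (le_of_lt ht0)
      _ = (Fintype.card ι : ℝ) * c ^ t.toReal := by
          rw [Finset.sum_const]; simp [nsmul_eq_mul]
  calc (∑ i, |v i| ^ t.toReal) ^ (1 / t.toReal)
      ≤ ((Fintype.card ι : ℝ) * c ^ t.toReal) ^ (1 / t.toReal) :=
        Real.rpow_le_rpow (Finset.sum_nonneg fun i _ => Real.rpow_nonneg (abs_nonneg _) _)
          h1 (by positivity)
    _ = (Fintype.card ι : ℝ) ^ (1 / t.toReal) * c := by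
        rw [Real.mul_rpow (by positivity) (Real.rpow_nonneg hc _),
          ← Real.rpow_mul hc, mul_one_div, div_self (ne_of_gt ht0), Real.rpow_one]
    _ ≤ (Fintype.card ι : ℝ) * c := by
        apply mul_le_mul_of_nonneg_right _ hc
        calc (Fintype.card ι : ℝ) ^ (1 / t.toReal) ≤ (Fintype.card ι : ℝ) ^ (1 : ℝ) :=
              Real.rpow_le_rpow_of_exponent_le hcard1 (by
                rw [div_le_one ht0]; exact ht1)
          _ = Fintype.card ι := Real.rpow_one _

lemma mixedNorm_ge_l1 {m k : ℕ} [Nonempty (Fin m)] [Nonempty (Fin k)] {q σ : ℝ≥0∞}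
    (hqtop : q ≠ ∞) (hstop : σ ≠ ∞) (hq1 : 1 ≤ q.toReal) (hσ1 : 1 ≤ σ.toReal)
    (w : Fin m → Fin k → ℝ) :
    (m : ℝ) ^ (1 / q.toReal - 1) * (k : ℝ) ^ (1 / σ.toReal - 1) * (∑ i, ∑ j, |w i j|)
      ≤ mixedNorm q σ w := by
  set b : Fin k → ℝ := fun j => lNorm q (fun i => w i j) with hb
  have hbn : ∀ j, 0 ≤ b j := fun j => lNorm_nonneg hqtop _
  have hcm : (Fintype.card (Fin m) : ℝ) = (m : ℝ) := by simp
  have hck : (Fintype.card (Fin k) : ℝ) = (k : ℝ) := by simp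
  have hbj : ∀ j, (m : ℝ) ^ (1 / q.toReal - 1) * ∑ i, |w i j| ≤ b j := by
    intro j
    rw [hb]
    simp only [lNorm, if_neg hqtop]
    have := sum_le_lp hq1 (fun i => |w i j|) (fun i => abs_nonneg _)
    rwa [hcm] at this
  have houter : (k : ℝ) ^ (1 / σ.toReal - 1) * ∑ j, b j ≤ mixedNorm q σ w := by
    rw [mixedNorm, lNorm, if_neg hstop]
    have := sum_le_lp hσ1 b hbn
    rw [hck] at this
    have habs : ∀ j, |lNorm q fun i => w i j| = b j := fun j => abs_of_nonneg (hbn j)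
    calc (k : ℝ) ^ (1 / σ.toReal - 1) * ∑ j, b j ≤ (∑ j, b j ^ σ.toReal) ^ (1 / σ.toReal) :=
          this
      _ = (∑ j, |lNorm q fun i => w i j| ^ σ.toReal) ^ (1 / σ.toReal) := by
          congr 1
          exact Finset.sum_congr rfl fun j _ => by rw [habs j]
  calc (m : ℝ) ^ (1 / q.toReal - 1) * (k : ℝ) ^ (1 / σ.toReal - 1) * (∑ i, ∑ j, |w i j|)
      = (k : ℝ) ^ (1 / σ.toReal - 1) * ∑ j, ((m : ℝ) ^ (1 / q.toReal - 1) * ∑ i, |w i j|) := by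
        rw [← Finset.mul_sum, Finset.sum_comm]
        ring
    _ ≤ (k : ℝ) ^ (1 / σ.toReal - 1) * ∑ j, b j := by
        apply mul_le_mul_of_nonneg_left _ (Real.rpow_nonneg (by positivity) _)
        exact Finset.sum_le_sum fun j _ => hbj j
    _ ≤ mixedNorm q σ w := houter

lemma entry_le {m k : ℕ} [Nonempty (Fin m)] [Nonempty (Fin k)]
    {x : Fin m → Fin k → ℝ} (hx : x ∈ mixedBall m k ∞ ∞) (i : Fin m) (j : Fin k) :
    |x i j| ≤ 1 := by
  have hx' : mixedNorm ∞ ∞ x ≤ 1 := hx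
  rw [mixedNorm, lNorm, if_pos rfl] at hx'
  have h1 : |x i j| ≤ ⨆ i', |x i' j| :=
    le_ciSup (f := fun i' => |x i' j|) (Set.finite_range _).bddAbove i
  have h2 : (⨆ i', |x i' j|) = lNorm ∞ fun i' => x i' j := by rw [lNorm, if_pos rfl]
  have h3 : (lNorm ∞ fun i' => x i' j) ≤ |lNorm ∞ fun i' => x i' j| := le_abs_self _
  have h4 : |lNorm ∞ fun i' => x i' j| ≤ ⨆ j', |lNorm ∞ fun i' => x i' j'| :=
    le_ciSup (f := fun j' => |lNorm ∞ fun i' => x i' j'|) (Set.finite_range _).bddAbove j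
  calc |x i j| ≤ ⨆ i', |x i' j| := h1
    _ = lNorm ∞ fun i' => x i' j := h2
    _ ≤ |lNorm ∞ fun i' => x i' j| := h3
    _ ≤ ⨆ j', |lNorm ∞ fun i' => x i' j'| := h4
    _ ≤ 1 := hx'


/-- There is an absolute constant `c > 0` (one can take `c = 1/2`) such that for all
`1 ≤ q, σ < ∞`, all `m, k ≥ 1` and all `0 ≤ n ≤ mk/2`,
`d_n(B^{m,k}_{∞,∞}, l^{m,k}_{q,σ}) ≥ c ⋅ m^{1/q} k^{1/σ}`. -/
theorem statement12 :
    ∃ c : ℝ, 0 < c ∧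
      ∀ (q σ : ℝ≥0∞), 1 ≤ q → q ≠ ∞ → 1 ≤ σ → σ ≠ ∞ →
      ∀ (m k n : ℕ), 0 < m → 0 < k → 2 * n ≤ m * k →
        c * ((m : ℝ) ^ ir q * (k : ℝ) ^ ir σ) ≤
          kolWidth m k n (mixedBall m k ∞ ∞) q σ := by
  refine ⟨1/2, by norm_num, ?_⟩
  intro q σ hq1 hqt hσ1 hσt m k n hm hk hn
  haveI : Nonempty (Fin m) := ⟨⟨0, hm⟩⟩
  haveI : Nonempty (Fin k) := ⟨⟨0, hk⟩⟩
  have hqr : 1 ≤ q.toReal := by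
    rw [← ENNReal.toReal_one]
    exact ENNReal.toReal_mono hqt hq1
  have hσr : 1 ≤ σ.toReal := by
    rw [← ENNReal.toReal_one]
    exact ENNReal.toReal_mono hσt hσ1
  have hirq : ir q = 1 / q.toReal := by rw [ir, ENNReal.toReal_inv, one_div]
  have hirσ : ir σ = 1 / σ.toReal := by rw [ir, ENNReal.toReal_inv, one_div]
  have hm0 : (0:ℝ) < m := by exact_mod_cast hm
  have hk0 : (0:ℝ) < k := by exact_mod_cast hk
  rw [kolWidth]
  haveI : Nonempty {L : Submodule ℝ (Fin m → Fin k → ℝ) // Module.finrank ℝ L ≤ n} :=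
    ⟨⟨⊥, by simp⟩⟩
  apply le_ciInf
  intro L
  obtain ⟨z, hzperp, hzcube, hzsum⟩ := perp_point m k L.1
  set x : Fin m → Fin k → ℝ := fun i j => if z i j < 0 then -1 else 1 with hxdef
  have hxabs : ∀ i j, |x i j| = 1 := by
    intro i j
    rw [hxdef]
    by_cases h : z i j < 0 <;> simp [h]
  have hxz : ∀ i j, x i j * z i j = |z i j| := by
    intro i j
    rw [hxdef]
    by_cases h : z i j < 0
    · simp only [if_pos h, abs_of_neg h]; ring
    · push_neg at h
      simp only [if_neg (not_lt.2 h), abs_of_nonneg h, one_mul]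
  have hxball : x ∈ mixedBall m k ∞ ∞ := by
    show mixedNorm ∞ ∞ x ≤ 1
    rw [mixedNorm, lNorm, if_pos rfl]
    have hinner : ∀ j, (lNorm ∞ fun i => x i j) = 1 := by
      intro j
      rw [lNorm, if_pos rfl]
      have he : (fun i => |x i j|) = fun _ => (1:ℝ) := funext fun i => hxabs i j
      rw [he]
      exact ciSup_const
    have he2 : (fun j => |lNorm ∞ fun i => x i j|) = fun _ => (1:ℝ) :=
      funext fun j => by rw [hinner j, abs_one]
    rw [he2]
    exact le_of_eq ciSup_const
  -- key inner bound
  have hkey : ∀ y : L.1,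
      1/2 * ((m:ℝ) ^ ir q * (k:ℝ) ^ ir σ) ≤
        mixedNorm q σ (x - (y : Fin m → Fin k → ℝ)) := by
    intro y
    set w : Fin m → Fin k → ℝ := x - (y : Fin m → Fin k → ℝ) with hwdef
    have hw : ∀ i j, w i j = x i j - (y : Fin m → Fin k → ℝ) i j := fun i j => rfl
    have hsum : (m:ℝ) * k / 2 ≤ ∑ i, ∑ j, |w i j| := by
      have e1 : ∑ i, ∑ j, w i j * z i j = ∑ i, ∑ j, |z i j| := by
        have h0 := hzperp (y : Fin m → Fin k → ℝ) y.2
        calc ∑ i, ∑ j, w i j * z i j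
            = ∑ i, ∑ j, (x i j * z i j - (y : Fin m → Fin k → ℝ) i j * z i j) := by
              apply Finset.sum_congr rfl; intro i _
              apply Finset.sum_congr rfl; intro j _
              rw [hw, sub_mul]
          _ = ∑ i, ∑ j, x i j * z i j - ∑ i, ∑ j, (y : Fin m → Fin k → ℝ) i j * z i j := by
              rw [← Finset.sum_sub_distrib]
              apply Finset.sum_congr rfl; intro i _
              rw [← Finset.sum_sub_distrib]
          _ = ∑ i, ∑ j, |z i j| := by
              rw [h0, sub_zero]
              apply Finset.sum_congr rfl; intro i _
              exact Finset.sum_congr rfl fun j _ => hxz i j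
      have e2 : ∑ i, ∑ j, w i j * z i j ≤ ∑ i, ∑ j, |w i j| := by
        apply Finset.sum_le_sum; intro i _
        apply Finset.sum_le_sum; intro j _
        calc w i j * z i j ≤ |w i j * z i j| := le_abs_self _
          _ = |w i j| * |z i j| := abs_mul _ _
          _ ≤ |w i j| * 1 := mul_le_mul_of_nonneg_left (hzcube i j) (abs_nonneg _)
          _ = |w i j| := mul_one _
      have e3 : (m:ℝ) * k - n ≤ ∑ i, ∑ j, |z i j| := by
        have hr : (Module.finrank ℝ L.1 : ℝ) ≤ n := by exact_mod_cast L.2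
        calc (m:ℝ) * k - n ≤ (m * k : ℝ) - Module.finrank ℝ L.1 := by linarith
          _ ≤ ∑ i, ∑ j, |z i j| := hzsum
      have e4 : (m:ℝ) * k / 2 ≤ (m:ℝ) * k - n := by
        have : (2 * n : ℝ) ≤ (m : ℝ) * k := by exact_mod_cast hn
        linarith
      linarith [e1, e2, e3, e4]
    have hineq := mixedNorm_ge_l1 (m := m) (k := k) hqt hσt hqr hσr w
    have ha : (m:ℝ) ^ (1/q.toReal - 1) = (m:ℝ) ^ (1/q.toReal) / m := by
      rw [Real.rpow_sub hm0, Real.rpow_one]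
    have hb : (k:ℝ) ^ (1/σ.toReal - 1) = (k:ℝ) ^ (1/σ.toReal) / k := by
      rw [Real.rpow_sub hk0, Real.rpow_one]
    have harith : 1/2 * ((m:ℝ) ^ ir q * (k:ℝ) ^ ir σ) =
        (m:ℝ) ^ (1/q.toReal - 1) * (k:ℝ) ^ (1/σ.toReal - 1) * ((m:ℝ) * k / 2) := by
      rw [hirq, hirσ, ha, hb]
      field_simp
    calc 1/2 * ((m:ℝ) ^ ir q * (k:ℝ) ^ ir σ)
        = (m:ℝ) ^ (1/q.toReal - 1) * (k:ℝ) ^ (1/σ.toReal - 1) * ((m:ℝ) * k / 2) := harith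
      _ ≤ (m:ℝ) ^ (1/q.toReal - 1) * (k:ℝ) ^ (1/σ.toReal - 1) * (∑ i, ∑ j, |w i j|) := by
          apply mul_le_mul_of_nonneg_left hsum
          positivity
      _ ≤ mixedNorm q σ w := hineq
  -- conclude
  haveI : Nonempty L.1 := ⟨0⟩
  have hbddA : BddAbove (Set.range fun x' : mixedBall m k ∞ ∞ =>
      ⨅ y : L.1, mixedNorm q σ ((x' : Fin m → Fin k → ℝ) - (y : Fin m → Fin k → ℝ))) := by
    refine ⟨(k:ℝ) * ((m:ℝ) * 1), ?_⟩
    rintro r ⟨x', rfl⟩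
    have hbb : BddBelow (Set.range fun y : L.1 =>
        mixedNorm q σ ((x' : Fin m → Fin k → ℝ) - (y : Fin m → Fin k → ℝ))) := by
      refine ⟨0, ?_⟩
      rintro r ⟨y, rfl⟩
      exact mixedNorm_nonneg hσt _
    have h0 : (⨅ y : L.1, mixedNorm q σ ((x' : Fin m → Fin k → ℝ) - (y : Fin m → Fin k → ℝ)))
        ≤ mixedNorm q σ ((x' : Fin m → Fin k → ℝ) - ((0 : L.1) : Fin m → Fin k → ℝ)) :=
      ciInf_le hbb (0 : L.1)
    have h1 : ((0 : L.1) : Fin m → Fin k → ℝ) = 0 := rfl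
    rw [h1, sub_zero] at h0
    refine le_trans h0 ?_
    -- mixedNorm q σ x' ≤ k * (m * 1)
    have hent := entry_le x'.2
    have hin : ∀ j, |lNorm q fun i => (x' : Fin m → Fin k → ℝ) i j| ≤ (m:ℝ) * 1 := by
      intro j
      rw [abs_of_nonneg (lNorm_nonneg hqt _)]
      have := lNorm_le_of_le (ι := Fin m) hqt hqr (v := fun i => (x' : Fin m → Fin k → ℝ) i j)
        (c := 1) zero_le_one (fun i => hent i j)
      simpa using this
    have := lNorm_le_of_le (ι := Fin k) hσt hσr
      (v := fun j => lNorm q fun i => (x' : Fin m → Fin k → ℝ) i j)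
      (c := (m:ℝ) * 1) (by positivity) hin
    rw [mixedNorm]
    simpa using this
  calc 1/2 * ((m:ℝ) ^ ir q * (k:ℝ) ^ ir σ)
      ≤ ⨅ y : L.1, mixedNorm q σ (((⟨x, hxball⟩ : mixedBall m k ∞ ∞) : Fin m → Fin k → ℝ)
          - (y : Fin m → Fin k → ℝ)) := le_ciInf hkey
    _ ≤ ⨆ x' : mixedBall m k ∞ ∞,
          ⨅ y : L.1, mixedNorm q σ ((x' : Fin m → Fin k → ℝ) - (y : Fin m → Fin k → ℝ)) :=
        le_ciSup hbddA ⟨x, hxball⟩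


end
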